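/- For integers s ≥ t+1 ≥ 3, the second largest eigenvalue of the distance matrix of K_s^t equals √2 - 2. -/

import Mathlib

noncomputable def sortedEigenvalues {ι : Type*} [Fintype ι] [DecidableEq ι]
    (A : Matrix ι ι ℝ) (hA : A.IsHermitian) : List ℝ :=
  (Finset.univ.val.map hA.eigenvalues).sort (· ≤ ·)

/-- `eig A hA k` is the `k`-th largest eigenvalue of `A` (1-indexed). -/
noncomputable def eig {ι : Type*} [Fintype ι] [DecidableEq ι]
    (A : Matrix ι ι ℝ) (hA : A.IsHermitian) (k : ℕ) : ℝ :=
  (sortedEigenvalues A hA)[Fintype.card ι - k]!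
/-- The distance matrix of the graph `K_s^t`, obtained from the complete graph `K_s`
by attaching a pendant vertex at each of `t` of its vertices (`t ≤ s`).
Clique vertices are `Sum.inl`, pendant vertices are `Sum.inr`; the `i`-th pendant
vertex is attached to the `i`-th clique vertex. -/
def DKst (s t : ℕ) : Matrix (Fin s ⊕ Fin t) (Fin s ⊕ Fin t) ℝ :=
  fun x y =>
    match x, y with
    | .inl a, .inl b => if a = b then 0 else 1
    | .inl a, .inr b => if (a : ℕ) = (b : ℕ) then 1 else 2
    | .inr a, .inl b => if (a : ℕ) = (b : ℕ) then 1 else 2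
    | .inr a, .inr b => if a = b then 0 else 3

section Aux

open Matrix

/-! ### generic spectral lemmas -/

variable {n : Type*} [Fintype n] [DecidableEq n] {A : Matrix n n ℝ}

private lemma trace_eq_sum_eigs (hA : A.IsHermitian) : ∑ i, hA.eigenvalues i = A.trace := by
  conv_rhs => rw [hA.spectral_theorem]
  rw [Unitary.conjStarAlgAut_apply]
  rw [Matrix.trace_mul_cycle]
  rw [(Matrix.mem_unitaryGroup_iff').mp (Matrix.IsHermitian.eigenvectorUnitary hA).2, one_mul]
  simp [Matrix.trace_diagonal]

private lemma eigen_dot (hA : A.IsHermitian) (i j : n) :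
    ⇑(hA.eigenvectorBasis i) ⬝ᵥ ⇑(hA.eigenvectorBasis j) = if i = j then 1 else 0 := by
  have h := orthonormal_iff_ite.mp hA.eigenvectorBasis.orthonormal i j
  rw [PiLp.inner_apply] at h
  simpa [dotProduct, mul_comm] using h

private lemma symm_dot (hsymm : Aᵀ = A) (w x : n → ℝ) :
    (A *ᵥ w) ⬝ᵥ x = w ⬝ᵥ (A *ᵥ x) := by
  calc (A *ᵥ w) ⬝ᵥ x = (Aᵀ *ᵥ w) ⬝ᵥ x := by rw [hsymm]
    _ = (w ᵥ* A) ⬝ᵥ x := by rw [Matrix.mulVec_transpose]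
    _ = w ⬝ᵥ (A *ᵥ x) := (Matrix.dotProduct_mulVec w A x).symm

private lemma exists_eig_eq (hA : A.IsHermitian) (hsymm : Aᵀ = A) (x : n → ℝ) (hx : x ≠ 0)
    (v : ℝ) (hDx : A *ᵥ x = v • x) : ∃ i, hA.eigenvalues i = v := by
  by_contra hc
  push_neg at hc
  have hco : ∀ i, ⇑(hA.eigenvectorBasis i) ⬝ᵥ x = 0 := by
    intro i
    have h1 : (A *ᵥ ⇑(hA.eigenvectorBasis i)) ⬝ᵥ x
        = hA.eigenvalues i * (⇑(hA.eigenvectorBasis i) ⬝ᵥ x) := by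
      rw [hA.mulVec_eigenvectorBasis, smul_dotProduct]
      simp
    have h2 : (A *ᵥ ⇑(hA.eigenvectorBasis i)) ⬝ᵥ x
        = v * (⇑(hA.eigenvectorBasis i) ⬝ᵥ x) := by
      rw [symm_dot hsymm, hDx, dotProduct_smul]
      simp
    have h3 := h1.symm.trans h2
    rcases mul_eq_mul_right_iff.mp h3 with h | h
    · exact absurd h (hc i)
    · exact h
  apply hx
  have hx0 : (WithLp.toLp 2 x : EuclideanSpace ℝ n) = 0 := by
    have hrepr : hA.eigenvectorBasis.repr (WithLp.toLp 2 x : EuclideanSpace ℝ n) = 0 := by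
      ext i
      rw [OrthonormalBasis.repr_apply_apply, PiLp.inner_apply]
      have := hco i
      rw [dotProduct] at this
      simpa [mul_comm] using this
    exact (hA.eigenvectorBasis.repr.map_eq_zero_iff).mp hrepr
  simpa using congrArg WithLp.ofLp hx0

private lemma count_gt (hA : A.IsHermitian) (u : n → ℝ) (v : ℝ)
    (hq : ∀ x : n → ℝ, x ⬝ᵥ A *ᵥ x + (-v) * (∑ a, (x a)^2) ≤ (∑ a, u a * x a)^2) :
    (Finset.univ.filter fun i => v < hA.eigenvalues i).card ≤ 1 := by
  rw [Finset.card_le_one]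
  by_contra hc
  push_neg at hc
  obtain ⟨i, hi, j, hj, hij⟩ := hc
  rw [Finset.mem_filter] at hi hj
  have hvi : v < hA.eigenvalues i := hi.2
  have hvj : v < hA.eigenvalues j := hj.2
  set wi : n → ℝ := ⇑(hA.eigenvectorBasis i) with hwi
  set wj : n → ℝ := ⇑(hA.eigenvectorBasis j) with hwj
  set ci : ℝ := ∑ a, u a * wi a with hci
  set cj : ℝ := ∑ a, u a * wj a with hcj
  obtain ⟨α, β, hab, hortho⟩ : ∃ α β : ℝ, ¬(α = 0 ∧ β = 0) ∧ α * ci + β * cj = 0 := by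
    by_cases h : ci = 0
    · exact ⟨1, 0, by simp, by simp [h]⟩
    · exact ⟨cj, -ci, fun hh => h (by simpa using hh.2), by ring⟩
  set z : n → ℝ := fun a => α * wi a + β * wj a with hz
  have pull : ∀ (c : ℝ) (f g : n → ℝ), ∑ a, f a * (c * g a) = c * ∑ a, f a * g a := by
    intro c f g; rw [Finset.mul_sum]; apply Finset.sum_congr rfl; intros; ring
  have hdots : ∀ (p q : n → ℝ), p ⬝ᵥ q = ∑ a, p a * q a := fun _ _ => rfl
  have dii : ∑ a, wi a * wi a = 1 := by have := eigen_dot hA i i; simpa [hdots] using this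
  have djj : ∑ a, wj a * wj a = 1 := by have := eigen_dot hA j j; simpa [hdots] using this
  have dij : ∑ a, wi a * wj a = 0 := by have := eigen_dot hA i j; simpa [hdots, hij] using this
  have dji : ∑ a, wj a * wi a = 0 := by
    have := eigen_dot hA j i; simpa [hdots, Ne.symm hij] using this
  have husum : ∑ a, u a * z a = 0 := by
    simp only [hz, mul_add, Finset.sum_add_distrib, pull]
    exact hortho
  have hsq : ∑ a, (z a)^2 = α^2 + β^2 := by
    have e : ∀ a, (z a)^2 = α^2*(wi a*wi a) + (α*β)*(wi a*wj a)
        + (α*β)*(wj a*wi a) + β^2*(wj a*wj a) := fun a => by simp only [hz]; ring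
    simp only [e, Finset.sum_add_distrib, ← Finset.mul_sum, dii, djj, dij, dji]
    ring
  have hAz : A *ᵥ z = α • (hA.eigenvalues i • wi) + β • (hA.eigenvalues j • wj) := by
    have h1 := hA.mulVec_eigenvectorBasis i
    have h2 := hA.mulVec_eigenvectorBasis j
    have hz2 : z = α • wi + β • wj := funext fun a => by
      simp [hz, Pi.smul_apply, smul_eq_mul]
    rw [hz2, Matrix.mulVec_add, Matrix.mulVec_smul, Matrix.mulVec_smul, h1, h2]
  have hzAz : z ⬝ᵥ (A *ᵥ z) = α^2 * hA.eigenvalues i + β^2 * hA.eigenvalues j := by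
    rw [hAz, hdots]
    have e : ∀ a, z a * ((α • (hA.eigenvalues i • wi) + β • (hA.eigenvalues j • wj)) a)
        = (α * hA.eigenvalues i) * (z a * wi a) + (β * hA.eigenvalues j) * (z a * wj a) := by
      intro a; simp only [Pi.add_apply, Pi.smul_apply, smul_eq_mul]; ring
    have dzwi : ∑ a, z a * wi a = α := by
      have e2 : ∀ a, z a * wi a = α * (wi a * wi a) + β * (wj a * wi a) := fun a => by
        simp only [hz]; ring
      simp only [e2, Finset.sum_add_distrib, ← Finset.mul_sum, dii, dji]; ring
    have dzwj : ∑ a, z a * wj a = β := by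
      have e2 : ∀ a, z a * wj a = α * (wi a * wj a) + β * (wj a * wj a) := fun a => by
        simp only [hz]; ring
      simp only [e2, Finset.sum_add_distrib, ← Finset.mul_sum, djj, dij]; ring
    simp only [e, Finset.sum_add_distrib, ← Finset.mul_sum, dzwi, dzwj]
    ring
  have hle := hq z
  rw [hzAz, hsq, husum] at hle
  have e1 : α^2 * (hA.eigenvalues i - v) + β^2 * (hA.eigenvalues j - v) ≤ 0 := by nlinarith
  have t1 : 0 ≤ α^2 * (hA.eigenvalues i - v) := mul_nonneg (sq_nonneg α) (by linarith)
  have t2 : 0 ≤ β^2 * (hA.eigenvalues j - v) := mul_nonneg (sq_nonneg β) (by linarith)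
  have hα : α = 0 := by
    have : α^2 * (hA.eigenvalues i - v) = 0 := by linarith
    rcases mul_eq_zero.mp this with h | h
    · exact pow_eq_zero_iff (by norm_num) |>.mp h
    · exact absurd h (by linarith)
  have hβ : β = 0 := by
    have : β^2 * (hA.eigenvalues j - v) = 0 := by linarith
    rcases mul_eq_zero.mp this with h | h
    · exact pow_eq_zero_iff (by norm_num) |>.mp h
    · exact absurd h (by linarith)
  exact hab ⟨hα, hβ⟩

/-! ### the sorted list lemma -/

private lemma sorted_second (L : List ℝ) (v : ℝ) (hs : L.Pairwise (· ≤ ·)) (hlen : 2 ≤ L.length)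
    (hge : 2 ≤ L.countP (fun x => decide (v ≤ x)))
    (hgt : L.countP (fun x => decide (v < x)) ≤ 1) :
    L[L.length - 2]! = v := by
  set k := L.length - 2 with hk
  have hkl : k < L.length := by omega
  have hk1 : k + 1 < L.length := by omega
  rw [getElem!_pos L k hkl]
  have hmono : ∀ (a b : ℕ) (ha : a < L.length) (hb : b < L.length), a ≤ b → L[a] ≤ L[b] := by
    intro a b ha hb hab
    rcases Nat.lt_or_ge a b with h | h
    · exact List.pairwise_iff_get.mp hs ⟨a, ha⟩ ⟨b, hb⟩ h
    · have : a = b := by omega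
      subst this; rfl
  by_contra hne
  rcases lt_or_gt_of_ne hne with hlt | hgt2
  · have hc : L.countP (fun x => decide (v ≤ x))
        = (L.take (k+1)).countP (fun x => decide (v ≤ x))
          + (L.drop (k+1)).countP (fun x => decide (v ≤ x)) := by
      conv_lhs => rw [(List.take_append_drop (k+1) L).symm]
      exact List.countP_append
    have h1 : (L.take (k+1)).countP (fun x => decide (v ≤ x)) = 0 := by
      rw [List.countP_eq_zero]
      intro a ha
      obtain ⟨i, hi, hia⟩ := List.mem_iff_getElem.mp ha
      have hi' : i < k + 1 := by
        rw [List.length_take] at hi; omega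
      rw [List.getElem_take] at hia
      have hle : L[i] ≤ L[k] := hmono i k (by omega) hkl (by omega)
      simp only [decide_eq_true_eq]
      push_neg
      rw [← hia]; linarith
    have h2 := List.countP_le_length (p := fun x => decide (v ≤ x)) (l := L.drop (k+1))
    rw [List.length_drop] at h2
    omega
  · have hc : L.countP (fun x => decide (v < x))
        = (L.take k).countP (fun x => decide (v < x))
          + (L.drop k).countP (fun x => decide (v < x)) := by
      conv_lhs => rw [(List.take_append_drop k L).symm]
      exact List.countP_append
    have h1 : (L.drop k).countP (fun x => decide (v < x)) = (L.drop k).length := by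
      rw [List.countP_eq_length]
      intro a ha
      obtain ⟨i, hi, hia⟩ := List.mem_iff_getElem.mp ha
      rw [List.getElem_drop] at hia
      have hki : k + i < L.length := by rw [List.length_drop] at hi; omega
      have hle : L[k] ≤ L[k + i] := hmono k (k+i) hkl hki (by omega)
      simp only [decide_eq_true_eq]
      rw [← hia]; linarith
    have h2 : (L.drop k).length = 2 := by rw [List.length_drop]; omega
    omega

/-! ### sum expansion lemmas for `DKst` -/

variable {s t m : ℕ}

/-- `1` on the clique vertices, `2` on the pendant vertices. -/
private def uKst (s t : ℕ) : Fin s ⊕ Fin t → ℝ := Sum.elim (fun _ => 1) (fun _ => 2)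

private lemma hLL (c : ℝ) (f : Fin m → ℝ) :
    ∑ a, ∑ b, f a * ((if a = b then (0:ℝ) else c) * f b)
      = c * ((∑ j, f j)^2 - ∑ j, (f j)^2) := by
  have key : ∀ a b : Fin m, f a * ((if a = b then (0:ℝ) else c) * f b)
      = c * (f a * f b) - (if a = b then c * (f a * f b) else 0) := by
    intro a b; split <;> ring
  simp only [key, Finset.sum_sub_distrib, Finset.sum_ite_eq, Finset.mem_univ, if_true]
  rw [sq, Finset.sum_mul_sum]
  simp only [Finset.mul_sum, mul_sub, sq]

private lemma hLR (hts : t ≤ s) (g : Fin s → ℝ) (h : Fin t → ℝ) :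
    ∑ a, ∑ i : Fin t, g a * ((if (a:ℕ) = (i:ℕ) then (1:ℝ) else 2) * h i)
      = 2 * (∑ j, g j) * (∑ i, h i) - ∑ i, g (Fin.castLE hts i) * h i := by
  rw [Finset.sum_comm]
  have key : ∀ (i : Fin t) (a : Fin s), g a * ((if (a:ℕ) = (i:ℕ) then (1:ℝ) else 2) * h i)
      = 2 * (g a * h i) - (if a = Fin.castLE hts i then g a * h i else 0) := by
    intro i a
    have hiff : ((a:ℕ) = (i:ℕ)) ↔ a = Fin.castLE hts i := by rw [Fin.ext_iff]; simp
    rw [ite_congr (by simpa using propext hiff) (fun _ => rfl) (fun _ => rfl)]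
    split <;> ring
  simp only [key, Finset.sum_sub_distrib, Finset.sum_ite_eq', Finset.mem_univ, if_true]
  rw [mul_assoc, Finset.sum_mul_sum]
  rw [Finset.sum_comm (f := fun i a => 2 * (g a * h i))]
  simp only [Finset.mul_sum]

private lemma hRL (hts : t ≤ s) (g : Fin s → ℝ) (h : Fin t → ℝ) :
    ∑ i : Fin t, ∑ a : Fin s, h i * ((if (i:ℕ) = (a:ℕ) then (1:ℝ) else 2) * g a)
      = 2 * (∑ j, g j) * (∑ i, h i) - ∑ i, g (Fin.castLE hts i) * h i := by
  have key : ∀ (i : Fin t) (a : Fin s), h i * ((if (i:ℕ) = (a:ℕ) then (1:ℝ) else 2) * g a)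
      = 2 * (h i * g a) - (if a = Fin.castLE hts i then g a * h i else 0) := by
    intro i a
    have hiff : ((i:ℕ) = (a:ℕ)) ↔ a = Fin.castLE hts i := by rw [Fin.ext_iff]; simp [eq_comm]
    rw [ite_congr (by simpa using propext hiff) (fun _ => rfl) (fun _ => rfl)]
    split <;> ring
  simp only [key, Finset.sum_sub_distrib, Finset.sum_ite_eq', Finset.mem_univ, if_true]
  rw [mul_assoc, Finset.sum_mul_sum, Finset.sum_comm (f := fun a i => g a * h i)]
  simp only [Finset.mul_sum]
  congr 1
  apply Finset.sum_congr rfl; intros; apply Finset.sum_congr rfl; intros; ring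

private lemma DKst_form (hts : t ≤ s) (x : Fin s ⊕ Fin t → ℝ) :
    x ⬝ᵥ (DKst s t) *ᵥ x =
      (∑ j, x (.inl j))^2 - (∑ j, x (.inl j)^2)
      + 3 * ((∑ i, x (.inr i))^2 - ∑ i, x (.inr i)^2)
      + 4 * (∑ j, x (.inl j)) * (∑ i, x (.inr i))
      - 2 * ∑ i : Fin t, x (.inl (Fin.castLE hts i)) * x (.inr i) := by
  have expand : x ⬝ᵥ (DKst s t) *ᵥ x = ∑ a, ∑ b, x a * (DKst s t a b * x b) := by
    simp [dotProduct, Matrix.mulVec, Finset.mul_sum, mul_add]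
  rw [expand, Fintype.sum_sum_type]
  have e1 : ∀ a : Fin s, ∑ b, x (Sum.inl a) * (DKst s t (Sum.inl a) b * x b)
      = ∑ b, x (Sum.inl a) * ((if a = b then (0:ℝ) else 1) * x (Sum.inl b))
        + ∑ i : Fin t, x (Sum.inl a) * ((if (a:ℕ) = (i:ℕ) then (1:ℝ) else 2) * x (Sum.inr i)) := by
    intro a; rw [Fintype.sum_sum_type]; rfl
  have e2 : ∀ i : Fin t, ∑ b, x (Sum.inr i) * (DKst s t (Sum.inr i) b * x b)
      = ∑ a : Fin s, x (Sum.inr i) * ((if (i:ℕ) = (a:ℕ) then (1:ℝ) else 2) * x (Sum.inl a))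
        + ∑ i' : Fin t, x (Sum.inr i) * ((if i = i' then (0:ℝ) else 3) * x (Sum.inr i')) := by
    intro i; rw [Fintype.sum_sum_type]; rfl
  simp only [e1, e2, Finset.sum_add_distrib]
  rw [hLL 1 (fun j => x (Sum.inl j)), hLL 3 (fun i => x (Sum.inr i)),
    hLR hts (fun j => x (Sum.inl j)) (fun i => x (Sum.inr i)),
    hRL hts (fun j => x (Sum.inl j)) (fun i => x (Sum.inr i))]
  ring

/-- The crucial positive-semidefiniteness inequality:
`D + (2 - √2)·I ⪯ u uᵀ` as quadratic forms. -/
private lemma DKst_quad (hts : t ≤ s) (x : Fin s ⊕ Fin t → ℝ) :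
    x ⬝ᵥ (DKst s t) *ᵥ x + (2 - Real.sqrt 2) * (∑ a, (x a)^2)
      ≤ (∑ a, uKst s t a * x a)^2 := by
  set r := Real.sqrt 2 with hrdef
  have hr : r^2 = 2 := Real.sq_sqrt (by norm_num)
  have h1r : 1 ≤ r := by nlinarith [Real.sqrt_nonneg 2]
  set SC := ∑ j, x (.inl j) with hSC
  set SP := ∑ i, x (.inr i) with hSP
  set QC := ∑ j, x (.inl j)^2 with hQC
  set QP := ∑ i, x (.inr i)^2 with hQP
  set T := ∑ i : Fin t, x (.inl (Fin.castLE hts i)) * x (.inr i) with hT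
  set Qc := ∑ i : Fin t, x (.inl (Fin.castLE hts i))^2 with hQc
  set W := ∑ i : Fin t, (x (.inl (Fin.castLE hts i)) + (r+1) * x (.inr i))^2 with hWdef
  have hsum2 : ∑ a, (x a)^2 = QC + QP := by rw [Fintype.sum_sum_type]
  have husum : ∑ a, uKst s t a * x a = SC + 2 * SP := by
    rw [Fintype.sum_sum_type]
    simp only [uKst, Sum.elim_inl, Sum.elim_inr, one_mul]
    rw [← Finset.mul_sum]
  have hW : W = Qc + 2*(r+1)*T + (r+1)^2*QP := by
    have e : ∀ i : Fin t, (x (.inl (Fin.castLE hts i)) + (r+1) * x (.inr i))^2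
        = x (.inl (Fin.castLE hts i))^2 + (2*(r+1)) * (x (.inl (Fin.castLE hts i)) * x (.inr i))
          + (r+1)^2 * x (.inr i)^2 := fun i => by ring
    simp only [hWdef, e, Finset.sum_add_distrib, ← Finset.mul_sum]
    rfl
  have hWpos : 0 ≤ W := Finset.sum_nonneg fun i _ => sq_nonneg _
  have hQ : Qc ≤ QC := by
    rw [hQc, hQC]
    have him : ∑ i : Fin t, x (.inl (Fin.castLE hts i))^2
        = ∑ j ∈ Finset.univ.image (Fin.castLE hts), x (.inl j)^2 :=
      (Finset.sum_image (f := fun j : Fin s => x (.inl j)^2) (g := Fin.castLE hts)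
        (fun a _ b _ h => Fin.castLE_injective hts h)).symm
    rw [him]
    exact Finset.sum_le_sum_of_subset_of_nonneg (Finset.subset_univ _)
      (fun _ _ _ => sq_nonneg _)
  rw [DKst_form hts, hsum2, husum]
  have hkey : (SC + 2*SP)^2 - (SC^2 - QC + 3*(SP^2 - QP) + 4*SC*SP - 2*T) - (2-r)*(QC+QP)
      = SP^2 + (r-1)*(QC - Qc) + (r-1)*W := by
    rw [hW]; linear_combination (-(2*T + (1+r)*QP)) * hr
  nlinarith [sq_nonneg SP, mul_nonneg (sub_nonneg.2 h1r) (sub_nonneg.2 hQ),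
    mul_nonneg (sub_nonneg.2 h1r) hWpos]

/-! ### the eigenvector for `√2 - 2` -/

private noncomputable def xKst (s t : ℕ) : Fin s ⊕ Fin t → ℝ :=
  fun z => match z with
  | .inl j => (if (j:ℕ) = 0 then 1 else 0) - (if (j:ℕ) = 1 then 1 else 0)
  | .inr i => (1 - Real.sqrt 2) * ((if (i:ℕ) = 0 then 1 else 0) - (if (i:ℕ) = 1 then 1 else 0))

private lemma sum_match_t (hts : t ≤ s) (a : Fin s) (g : Fin t → ℝ) :
    ∑ i : Fin t, (if (a:ℕ) = (i:ℕ) then g i else 0)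
      = if h : (a:ℕ) < t then g ⟨a, h⟩ else 0 := by
  by_cases h : (a:ℕ) < t
  · rw [dif_pos h]
    have e : ∀ i : Fin t, ((a:ℕ) = (i:ℕ)) = (i = (⟨(a:ℕ), h⟩ : Fin t)) := by
      intro i; rw [Fin.ext_iff]; simp only [eq_iff_iff]; constructor <;> omega
    simp only [e]
    rw [Finset.sum_ite_eq' Finset.univ (⟨(a:ℕ), h⟩ : Fin t) g]
    simp
  · rw [dif_neg h]
    apply Finset.sum_eq_zero
    intro i _
    rw [if_neg]; omega

private lemma sum_match_s (hts : t ≤ s) (i : Fin t) (g : Fin s → ℝ) :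
    ∑ j : Fin s, (if (i:ℕ) = (j:ℕ) then g j else 0) = g (Fin.castLE hts i) := by
  have e : ∀ j : Fin s, ((i:ℕ) = (j:ℕ)) = (j = Fin.castLE hts i) := by
    intro j; rw [Fin.ext_iff]; simp only [Fin.coe_castLE, eq_iff_iff]; constructor <;> omega
  simp only [e]
  rw [Finset.sum_ite_eq' Finset.univ (Fin.castLE hts i) g]
  simp

private lemma row_sums (hts : t ≤ s) (x : Fin s ⊕ Fin t → ℝ) :
    ∀ z, ((DKst s t) *ᵥ x) z =
      match z with
      | .inl a => (∑ j, x (.inl j)) - x (.inl a) + 2 * (∑ i, x (.inr i))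
          - (if h : (a:ℕ) < t then x (.inr ⟨(a:ℕ), h⟩) else 0)
      | .inr i => 2 * (∑ j, x (.inl j)) - x (.inl (Fin.castLE hts i))
          + 3 * (∑ i', x (.inr i')) - 3 * x (.inr i) := by
  intro z
  cases z with
  | inl a =>
    show ∑ b, DKst s t (.inl a) b * x b = _
    rw [Fintype.sum_sum_type]
    have e1 : ∀ j : Fin s, DKst s t (.inl a) (.inl j) * x (.inl j)
        = x (.inl j) - (if a = j then x (.inl j) else 0) := by
      intro j; show (if a = j then (0:ℝ) else 1) * x (.inl j) = _; split <;> ring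
    have e2 : ∀ i : Fin t, DKst s t (.inl a) (.inr i) * x (.inr i)
        = 2 * x (.inr i) - (if (a:ℕ) = (i:ℕ) then x (.inr i) else 0) := by
      intro i; show (if (a:ℕ) = (i:ℕ) then (1:ℝ) else 2) * x (.inr i) = _; split <;> ring
    simp only [e1, e2, Finset.sum_sub_distrib, Finset.sum_ite_eq, Finset.mem_univ, if_true,
      sum_match_t hts, ← Finset.mul_sum]
    ring
  | inr i =>
    show ∑ b, DKst s t (.inr i) b * x b = _
    rw [Fintype.sum_sum_type]
    have e1 : ∀ j : Fin s, DKst s t (.inr i) (.inl j) * x (.inl j)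
        = 2 * x (.inl j) - (if (i:ℕ) = (j:ℕ) then x (.inl j) else 0) := by
      intro j; show (if (i:ℕ) = (j:ℕ) then (1:ℝ) else 2) * x (.inl j) = _; split <;> ring
    have e2 : ∀ i' : Fin t, DKst s t (.inr i) (.inr i') * x (.inr i')
        = 3 * x (.inr i') - (if i = i' then 3 * x (.inr i') else 0) := by
      intro i'; show (if i = i' then (0:ℝ) else 3) * x (.inr i') = _; split <;> ring
    simp only [e1, e2, Finset.sum_sub_distrib, Finset.sum_ite_eq, Finset.mem_univ, if_true,
      sum_match_s hts, ← Finset.mul_sum]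
    ring

private lemma xKst_eigen (ht : 2 ≤ t) (hst : t + 1 ≤ s) :
    (DKst s t) *ᵥ (xKst s t) = (Real.sqrt 2 - 2) • (xKst s t) := by
  have hts : t ≤ s := by omega
  have hr : Real.sqrt 2 ^ 2 = 2 := Real.sq_sqrt (by norm_num)
  have hs0 : 0 < s := by omega
  have hs1 : 1 < s := by omega
  have ht0 : 0 < t := by omega
  have ht1 : 1 < t := by omega
  have hsum1 : ∑ j : Fin s, xKst s t (.inl j) = 0 := by
    show ∑ j : Fin s, ((if ((j:ℕ) = 0) then (1:ℝ) else 0) - (if (j:ℕ) = 1 then 1 else 0)) = 0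
    have e0 : ∀ j : Fin s, ((j:ℕ) = 0) = (j = (⟨0, hs0⟩ : Fin s)) := by
      intro j; simp [Fin.ext_iff]
    have e1 : ∀ j : Fin s, ((j:ℕ) = 1) = (j = (⟨1, hs1⟩ : Fin s)) := by
      intro j; simp [Fin.ext_iff]
    simp only [e0, e1, Finset.sum_sub_distrib, Finset.sum_ite_eq', Finset.mem_univ, if_true]
    ring
  have hsum2 : ∑ i : Fin t, xKst s t (.inr i) = 0 := by
    show ∑ i : Fin t, (1 - Real.sqrt 2) *
      ((if ((i:ℕ) = 0) then (1:ℝ) else 0) - (if (i:ℕ) = 1 then 1 else 0)) = 0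
    have e0 : ∀ i : Fin t, ((i:ℕ) = 0) = (i = (⟨0, ht0⟩ : Fin t)) := by
      intro i; simp [Fin.ext_iff]
    have e1 : ∀ i : Fin t, ((i:ℕ) = 1) = (i = (⟨1, ht1⟩ : Fin t)) := by
      intro i; simp [Fin.ext_iff]
    simp only [e0, e1, ← Finset.mul_sum, Finset.sum_sub_distrib, Finset.sum_ite_eq',
      Finset.mem_univ, if_true]
    ring
  funext z
  rw [row_sums hts (xKst s t) z]
  cases z with
  | inl a =>
    simp only [hsum1, hsum2, Pi.smul_apply, smul_eq_mul]
    by_cases h : (a:ℕ) < t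
    · rw [dif_pos h]
      show 0 - ((if ((a:ℕ) = 0) then (1:ℝ) else 0) - (if (a:ℕ) = 1 then 1 else 0)) + 2*0
          - ((1 - Real.sqrt 2) *
            ((if ((a:ℕ) = 0) then (1:ℝ) else 0) - (if (a:ℕ) = 1 then 1 else 0)))
          = (Real.sqrt 2 - 2) *
            ((if ((a:ℕ) = 0) then (1:ℝ) else 0) - (if (a:ℕ) = 1 then 1 else 0))
      split <;> split <;> ring
    · rw [dif_neg h]
      have h0 : ¬ ((a:ℕ) = 0) := by omega
      have h1 : ¬ ((a:ℕ) = 1) := by omega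
      show 0 - ((if ((a:ℕ) = 0) then (1:ℝ) else 0) - (if (a:ℕ) = 1 then 1 else 0)) + 2*0 - 0
          = (Real.sqrt 2 - 2) *
            ((if ((a:ℕ) = 0) then (1:ℝ) else 0) - (if (a:ℕ) = 1 then 1 else 0))
      rw [if_neg h0, if_neg h1]; ring
  | inr i =>
    simp only [hsum1, hsum2, Pi.smul_apply, smul_eq_mul]
    show 2*0 - ((if ((i:ℕ) = 0) then (1:ℝ) else 0) - (if (i:ℕ) = 1 then 1 else 0)) + 3*0
        - 3 * ((1 - Real.sqrt 2) *
          ((if ((i:ℕ) = 0) then (1:ℝ) else 0) - (if (i:ℕ) = 1 then 1 else 0)))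
        = (Real.sqrt 2 - 2) * ((1 - Real.sqrt 2) *
          ((if ((i:ℕ) = 0) then (1:ℝ) else 0) - (if (i:ℕ) = 1 then 1 else 0)))
    split <;> split <;> (try ring) <;> linarith [hr]

private lemma DKst_symm : (DKst s t)ᵀ = DKst s t := by
  ext a b
  cases a <;> cases b <;> simp [DKst, Matrix.transpose_apply, eq_comm]

private lemma DKst_trace : (DKst s t).trace = 0 := by
  simp [Matrix.trace, Matrix.diag, DKst, Fintype.sum_sum_type]

end Aux

theorem second_eigenvalue_Kst {s t : ℕ} (ht : 2 ≤ t) (hst : t + 1 ≤ s)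
    (hD : (DKst s t).IsHermitian) :
    eig _ hD 2 = Real.sqrt 2 - 2 := by
  classical
  have hts : t ≤ s := by omega
  set v : ℝ := Real.sqrt 2 - 2 with hv
  have hr : Real.sqrt 2 ^ 2 = 2 := Real.sq_sqrt (by norm_num)
  have hvneg : v < 0 := by nlinarith [Real.sqrt_nonneg 2]
  -- existence of the eigenvalue v
  have hx0ne : xKst s t ≠ 0 := by
    intro h
    have := congrFun h (Sum.inl (⟨0, by omega⟩ : Fin s))
    simp [xKst] at this
  obtain ⟨i0, hi0⟩ := exists_eig_eq hD DKst_symm (xKst s t) hx0ne v (xKst_eigen ht hst)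
  -- at least two eigenvalues ≥ v
  have htr : ∑ i, hD.eigenvalues i = 0 := by rw [trace_eq_sum_eigs hD, DKst_trace]
  have hge2 : 2 ≤ (Finset.univ.filter fun i => v ≤ hD.eigenvalues i).card := by
    obtain ⟨j, hjne, hjge⟩ : ∃ j, j ≠ i0 ∧ v ≤ hD.eigenvalues j := by
      by_contra hcon
      push_neg at hcon
      have hne : (Finset.univ.erase i0).Nonempty := by
        rw [← Finset.card_pos, Finset.card_erase_of_mem (Finset.mem_univ i0)]
        have : 2 ≤ Fintype.card (Fin s ⊕ Fin t) := by
          simp only [Fintype.card_sum, Fintype.card_fin]; omega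
        rw [Finset.card_univ]; omega
      have hsum : ∑ j ∈ Finset.univ.erase i0, hD.eigenvalues j < 0 := by
        calc ∑ j ∈ Finset.univ.erase i0, hD.eigenvalues j
            < ∑ _j ∈ Finset.univ.erase i0, (0:ℝ) :=
              Finset.sum_lt_sum_of_nonempty hne (fun j hj =>
                lt_trans (hcon j (Finset.ne_of_mem_erase hj)) hvneg)
          _ = 0 := by simp
      rw [← Finset.add_sum_erase _ _ (Finset.mem_univ i0), hi0] at htr
      linarith
    refine Finset.one_lt_card.mpr ⟨i0, ?_, j, ?_, hjne.symm⟩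
    · simp [hi0]
    · simp [hjge]
  -- at most one eigenvalue > v
  have hle1 : (Finset.univ.filter fun i => v < hD.eigenvalues i).card ≤ 1 := by
    apply count_gt hD (uKst s t) v
    intro x
    have h := DKst_quad hts x
    have : -v = 2 - Real.sqrt 2 := by rw [hv]; ring
    rw [this]
    exact h
  -- the sorted list
  have hcard : Fintype.card (Fin s ⊕ Fin t) = s + t := by
    simp [Fintype.card_sum, Fintype.card_fin]
  set L : List ℝ := sortedEigenvalues (DKst s t) hD with hL
  have hLcoe : (L : Multiset ℝ) = Finset.univ.val.map hD.eigenvalues :=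
    Multiset.sort_eq _ _
  have hlen : L.length = s + t := by
    rw [hL]
    show (Multiset.sort _ _).length = s + t
    rw [Multiset.length_sort, Multiset.card_map]
    show Finset.univ.card = s + t
    rw [Finset.card_univ, hcard]
  have hsorted : L.Pairwise (· ≤ ·) := Multiset.pairwise_sort _ _
  have hcount_ge : 2 ≤ L.countP (fun x => decide (v ≤ x)) := by
    have h1 : Multiset.countP (fun x => v ≤ x) (L : Multiset ℝ)
        = L.countP (fun x => decide (v ≤ x)) := Multiset.coe_countP _ _
    rw [← h1, hLcoe, Multiset.countP_map]
    have : (Finset.univ.filter fun i => v ≤ hD.eigenvalues i).card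
        = Multiset.card (Multiset.filter (fun a => v ≤ hD.eigenvalues a) Finset.univ.val) := by
      rw [Finset.card_filter]
      simp [Finset.card, Multiset.countP_eq_card_filter]
    omega
  have hcount_gt : L.countP (fun x => decide (v < x)) ≤ 1 := by
    have h1 : Multiset.countP (fun x => v < x) (L : Multiset ℝ)
        = L.countP (fun x => decide (v < x)) := Multiset.coe_countP _ _
    rw [← h1, hLcoe, Multiset.countP_map]
    have : (Finset.univ.filter fun i => v < hD.eigenvalues i).card
        = Multiset.card (Multiset.filter (fun a => v < hD.eigenvalues a) Finset.univ.val) := by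
      rw [Finset.card_filter]
      simp [Finset.card, Multiset.countP_eq_card_filter]
    omega
  have hfinal := sorted_second L v hsorted (by omega) hcount_ge hcount_gt
  show L[Fintype.card (Fin s ⊕ Fin t) - 2]! = v
  rw [hcard, ← hlen]
  exact hfinal
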